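/- arXiv:2407.21542 — 2 statements merged into one kernel-verified Lean document; each statement's English description precedes it below -/
import Mathlib

section
/- For the family of triangular distributions on [a,b] with mode m, whose density is q_m(x) = 2(x-a)/((b-a)(m-a)) for x in [a,m] and 2(b-x)/((b-a)(b-m)) for x in (m,b], the Fisher information at parameter m ∈ (a,b) equals 1/((m-a)(b-m)). -/
open Real MeasureTheory

/-- Triangular density on `[a,b]` with mode `m`. -/
noncomputable def triangularDensity (a b m x : ℝ) : ℝ :=
  if x ≤ m then 2 * (x - a) / ((b - a) * (m - a))
  else 2 * (b - x) / ((b - a) * (b - m))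

lemma deriv_log_triang_left (a b m x : ℝ) (hab : a < b) (hmb : m < b)
    (hx : x ∈ Set.Ioo a m) :
    deriv (fun m' => Real.log (triangularDensity a b m' x)) m = -(m - a)⁻¹ := by
  obtain ⟨hax, hxm⟩ := hx
  have hba : (0:ℝ) < b - a := sub_pos.mpr hab
  have hxa : (0:ℝ) < x - a := sub_pos.mpr hax
  have hev : (fun m' => Real.log (triangularDensity a b m' x)) =ᶠ[nhds m]
      fun m' => Real.log (2 * (x - a) / (b - a)) - Real.log (m' - a) := by
    filter_upwards [Ioo_mem_nhds hxm hmb] with m' hm'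
    obtain ⟨h1, h2⟩ := hm'
    have hma : (0:ℝ) < m' - a := sub_pos.mpr (lt_trans hax h1)
    rw [triangularDensity, if_pos h1.le]
    have heq : 2 * (x - a) / ((b - a) * (m' - a)) = (2 * (x - a) / (b - a)) / (m' - a) := by
      field_simp
    rw [heq, Real.log_div (ne_of_gt (by positivity)) (ne_of_gt hma)]
  rw [hev.deriv_eq]
  have hma0 : (0:ℝ) < m - a := sub_pos.mpr (lt_trans hax hxm)
  have h1 : HasDerivAt (fun m' : ℝ => Real.log (m' - a)) (1 / (m - a)) m := by
    have := ((hasDerivAt_id m).sub_const a).log (ne_of_gt hma0)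
    simpa using this
  have h2 := ((hasDerivAt_const m (Real.log (2 * (x - a) / (b - a)))).sub h1).deriv
  change deriv ((fun _ => Real.log (2 * (x - a) / (b - a))) - fun m' => Real.log (m' - a)) m = _
  rw [h2, one_div]; ring

lemma deriv_log_triang_right (a b m x : ℝ) (hab : a < b) (ham : a < m)
    (hx : x ∈ Set.Ioo m b) :
    deriv (fun m' => Real.log (triangularDensity a b m' x)) m = (b - m)⁻¹ := by
  obtain ⟨hmx, hxb⟩ := hx
  have hba : (0:ℝ) < b - a := sub_pos.mpr hab
  have hbx : (0:ℝ) < b - x := sub_pos.mpr hxb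
  have hev : (fun m' => Real.log (triangularDensity a b m' x)) =ᶠ[nhds m]
      fun m' => Real.log (2 * (b - x) / (b - a)) - Real.log (b - m') := by
    filter_upwards [Ioo_mem_nhds ham hmx] with m' hm'
    obtain ⟨h1, h2⟩ := hm'
    have hbm : (0:ℝ) < b - m' := sub_pos.mpr (lt_trans h2 hxb)
    rw [triangularDensity, if_neg (not_le.mpr h2)]
    have heq : 2 * (b - x) / ((b - a) * (b - m')) = (2 * (b - x) / (b - a)) / (b - m') := by
      field_simp
    rw [heq, Real.log_div (ne_of_gt (by positivity)) (ne_of_gt hbm)]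
  rw [hev.deriv_eq]
  have hbm0 : (0:ℝ) < b - m := sub_pos.mpr (lt_trans hmx hxb)
  have h1 : HasDerivAt (fun m' : ℝ => Real.log (b - m')) (-1 / (b - m)) m := by
    have := (((hasDerivAt_const m b).sub (hasDerivAt_id m))).log (ne_of_gt hbm0)
    simpa using this
  have h2 := ((hasDerivAt_const m (Real.log (2 * (b - x) / (b - a)))).sub h1).deriv
  change deriv ((fun _ => Real.log (2 * (b - x) / (b - a))) - fun m' => Real.log (b - m')) m = _
  rw [h2]; field_simp; ring

lemma deriv_log_triang_b (a b m : ℝ) (ham : a < m) (hmb : m < b) :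
    deriv (fun m' => Real.log (triangularDensity a b m' b)) m = 0 := by
  have hev : (fun m' => Real.log (triangularDensity a b m' b)) =ᶠ[nhds m]
      fun _ => (0:ℝ) := by
    filter_upwards [Ioo_mem_nhds ham hmb] with m' hm'
    obtain ⟨h1, h2⟩ := hm'
    rw [triangularDensity, if_neg (not_le.mpr h2)]
    simp
  rw [hev.deriv_eq, deriv_const]

/-- the Fisher information of the triangular family on `[a,b]`
at `m ∈ (a,b)` equals `1/((m-a)(b-m))`. -/
theorem fisher_info_triangular (a b m : ℝ) (hab : a < b) (ham : a < m) (hmb : m < b) :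
    ∫ x in a..b,
        (deriv (fun m' => Real.log (triangularDensity a b m' x)) m) ^ 2
          * triangularDensity a b m x
      = 1 / ((m - a) * (b - m)) := by
  have hba : (0:ℝ) < b - a := sub_pos.mpr hab
  have hma : (0:ℝ) < m - a := sub_pos.mpr ham
  have hbm : (0:ℝ) < b - m := sub_pos.mpr hmb
  set g : ℝ → ℝ := fun x => if x ≤ m then
      ((m - a)⁻¹) ^ 2 * (2 * (x - a) / ((b - a) * (m - a)))
    else ((b - m)⁻¹) ^ 2 * (2 * (b - x) / ((b - a) * (b - m))) with hg
  have hcongr : ∫ x in a..b,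
      (deriv (fun m' => Real.log (triangularDensity a b m' x)) m) ^ 2
        * triangularDensity a b m x = ∫ x in a..b, g x := by
    apply intervalIntegral.integral_congr_ae
    have hm0 : (volume : Measure ℝ) {m} = 0 := measure_singleton m
    filter_upwards [compl_mem_ae_iff.mpr hm0] with x hxm hx
    rw [Set.uIoc_of_le hab.le] at hx
    obtain ⟨hax, hxb⟩ := hx
    simp only [Set.mem_compl_iff, Set.mem_singleton_iff] at hxm
    rcases lt_trichotomy x m with h | h | h
    · rw [deriv_log_triang_left a b m x hab hmb ⟨hax, h⟩]
      rw [hg]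
      simp only [triangularDensity, if_pos h.le]
      ring
    · exact absurd h hxm
    · rcases eq_or_lt_of_le hxb with hb | hb
      · rw [hb, deriv_log_triang_b a b m ham hmb]
        rw [hg]
        simp only [triangularDensity]
        rw [if_neg (not_le.mpr (hb ▸ h)), if_neg (not_le.mpr (hb ▸ h))]
        ring
      · rw [deriv_log_triang_right a b m x hab ham ⟨h, hb⟩]
        rw [hg]
        simp only [triangularDensity, if_neg (not_le.mpr h)]
  rw [hcongr]
  -- integrability of g on each piece
  have hcl : Continuous (fun x : ℝ => ((m - a)⁻¹) ^ 2 * (2 * (x - a) / ((b - a) * (m - a)))) := by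
    fun_prop
  have hcr : Continuous (fun x : ℝ => ((b - m)⁻¹) ^ 2 * (2 * (b - x) / ((b - a) * (b - m)))) := by
    fun_prop
  have hleq : ∀ x ∈ Set.uIoc a m, g x =
      ((m - a)⁻¹) ^ 2 * (2 * (x - a) / ((b - a) * (m - a))) := by
    intro x hx
    rw [Set.uIoc_of_le ham.le] at hx
    rw [hg]; simp only [if_pos hx.2]
  have hreq : ∀ x ∈ Set.uIoc m b, g x =
      ((b - m)⁻¹) ^ 2 * (2 * (b - x) / ((b - a) * (b - m))) := by
    intro x hx
    rw [Set.uIoc_of_le hmb.le] at hx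
    rw [hg]; simp only [if_neg (not_le.mpr hx.1)]
  have hil : IntervalIntegrable g volume a m := by
    apply (hcl.intervalIntegrable a m).congr
    exact fun x hx => (hleq x hx).symm
  have hir : IntervalIntegrable g volume m b := by
    apply (hcr.intervalIntegrable m b).congr
    exact fun x hx => (hreq x hx).symm
  rw [← intervalIntegral.integral_add_adjacent_intervals hil hir]
  have hvl : ∫ x in a..m, g x = ((m - a)⁻¹) ^ 2 * ((m - a)^2 / ((b - a) * (m - a))) := by
    rw [intervalIntegral.integral_congr_ae (ae_of_all _ fun x hx => hleq x hx)]
    rw [intervalIntegral.integral_const_mul]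
    have : ∀ x : ℝ, 2 * (x - a) / ((b - a) * (m - a))
        = (2 / ((b - a) * (m - a))) * x - (2 / ((b - a) * (m - a))) * a := by
      intro x; field_simp
    simp_rw [this]
    have hid : ∫ x in a..m, (x:ℝ) = (m ^ 2 - a ^ 2) / 2 := by simp
    have hii : IntervalIntegrable (fun x : ℝ => x) volume a m := by
      exact continuous_id.intervalIntegrable _ _
    rw [intervalIntegral.integral_sub (hii.const_mul _)
      (intervalIntegrable_const), intervalIntegral.integral_const_mul, hid,
      intervalIntegral.integral_const]
    simp only [smul_eq_mul]
    field_simp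
    ring
  have hvr : ∫ x in m..b, g x = ((b - m)⁻¹) ^ 2 * ((b - m)^2 / ((b - a) * (b - m))) := by
    rw [intervalIntegral.integral_congr_ae (ae_of_all _ fun x hx => hreq x hx)]
    rw [intervalIntegral.integral_const_mul]
    have : ∀ x : ℝ, 2 * (b - x) / ((b - a) * (b - m))
        = (2 / ((b - a) * (b - m))) * b - (2 / ((b - a) * (b - m))) * x := by
      intro x; field_simp
    simp_rw [this]
    have hid : ∫ x in m..b, (x:ℝ) = (b ^ 2 - m ^ 2) / 2 := by simp
    have hii : IntervalIntegrable (fun x : ℝ => x) volume m b := by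
      exact continuous_id.intervalIntegrable _ _
    rw [intervalIntegral.integral_sub (intervalIntegrable_const)
      (hii.const_mul _), intervalIntegral.integral_const_mul,
      intervalIntegral.integral_const_mul, hid, intervalIntegral.integral_const]
    field_simp
    ring
  rw [hvl, hvr]
  field_simp
  ring
end

section
/- For the triangular family on [a,b], the Fisher-Rao distance between parameters m_0, m_1 ∈ (a,b) equals |arcsin((m_1-α)/√β) - arcsin((m_0-α)/√β)|, where α = (a+b)/2 and β = ((a-b)/2)^2. -/
open Real

lemma triangular_hasDerivAt (a b : ℝ) (hab : a < b) {m : ℝ} (h1 : a < m) (h2 : m < b) :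
    HasDerivAt (fun x => Real.arcsin ((x - (a + b) / 2) / ((b - a) / 2)))
      (Real.sqrt (1 / ((m - a) * (b - m)))) m := by
  have hba : (0:ℝ) < b - a := by linarith
  set u : ℝ := (m - (a + b) / 2) / ((b - a) / 2) with hu
  have hu1 : -1 < u := by
    rw [hu, lt_div_iff₀ (by linarith)]; linarith
  have hu2 : u < 1 := by
    rw [hu, div_lt_iff₀ (by linarith)]; linarith
  have hg : HasDerivAt (fun x : ℝ => (x - (a + b) / 2) / ((b - a) / 2)) (1 / ((b - a) / 2)) m := by
    simpa using ((hasDerivAt_id m).sub_const ((a + b) / 2)).div_const ((b - a) / 2)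
  have harc := (Real.hasDerivAt_arcsin (ne_of_gt hu1) (ne_of_lt hu2)).comp m hg
  refine harc.congr_deriv ?_
  have hprod : (0:ℝ) < (m - a) * (b - m) := mul_pos (by linarith) (by linarith)
  have h1u : 1 - u ^ 2 = 4 * ((m - a) * (b - m)) / (b - a) ^ 2 := by
    rw [hu]; field_simp; ring
  have hsq : Real.sqrt (1 - u ^ 2) = 2 * Real.sqrt ((m - a) * (b - m)) / (b - a) := by
    rw [h1u]
    rw [show (4:ℝ) * ((m - a) * (b - m)) / (b - a) ^ 2
        = (2 * Real.sqrt ((m - a) * (b - m)) / (b - a)) ^ 2 by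
      rw [div_pow, mul_pow, sq_sqrt hprod.le]; norm_num]
    exact Real.sqrt_sq (by positivity)
  rw [hsq, one_div ((m - a) * (b - m)), Real.sqrt_inv]
  have hs : Real.sqrt ((m - a) * (b - m)) ≠ 0 := by positivity
  field_simp

/-- the Fisher-Rao distance in the triangular family on `[a,b]`,
given by `|∫_{m₀}^{m₁} √(i_m) dm|` with `i_m = 1/((m-a)(b-m))`, equals
`|arcsin((m₁-α)/√β) - arcsin((m₀-α)/√β)|` with `α = (a+b)/2`, `β = ((a-b)/2)²`. -/
theorem fisherRao_dist_triangular (a b m₀ m₁ : ℝ) (hab : a < b)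
    (hm₀ : m₀ ∈ Set.Ioo a b) (hm₁ : m₁ ∈ Set.Ioo a b) :
    |∫ m in m₀..m₁, Real.sqrt (1 / ((m - a) * (b - m)))| =
      |Real.arcsin ((m₁ - (a + b) / 2) / Real.sqrt (((a - b) / 2) ^ 2))
        - Real.arcsin ((m₀ - (a + b) / 2) / Real.sqrt (((a - b) / 2) ^ 2))| := by
  have hsqb : Real.sqrt (((a - b) / 2) ^ 2) = (b - a) / 2 := by
    rw [Real.sqrt_sq_eq_abs, abs_of_neg (by linarith)]; ring
  rw [hsqb]
  have hsub : Set.uIcc m₀ m₁ ⊆ Set.Ioo a b :=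
    Set.ordConnected_Ioo.uIcc_subset hm₀ hm₁
  have key : ∀ m ∈ Set.uIcc m₀ m₁,
      HasDerivAt (fun x => Real.arcsin ((x - (a + b) / 2) / ((b - a) / 2)))
        (Real.sqrt (1 / ((m - a) * (b - m)))) m := fun m hm =>
    triangular_hasDerivAt a b hab (hsub hm).1 (hsub hm).2
  have hint : IntervalIntegrable (fun m => Real.sqrt (1 / ((m - a) * (b - m))))
      MeasureTheory.volume m₀ m₁ := by
    apply ContinuousOn.intervalIntegrable
    apply ContinuousOn.sqrt
    apply ContinuousOn.div continuousOn_const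
    · fun_prop
    · intro m hm
      have := hsub hm
      have : (0:ℝ) < (m - a) * (b - m) := mul_pos (by linarith [this.1]) (by linarith [this.2])
      exact this.ne'
  rw [intervalIntegral.integral_eq_sub_of_hasDerivAt key hint]
end
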